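/- Let G, H, K be finite groups, X ≤ G × H and Y ≤ H × K subgroups, Z ⊴ X and T ⊴ Y (or just Z ≤ X, T ≤ Y). Set D = k₂(X) ∩ k₁(Y), where k₂(X) = {h ∈ H : (1,h) ∈ X} and k₁(Y) = {h ∈ H : (h,1) ∈ Y}. Then the stabilizer in X*Y of the point ((u,v)Z, (w,r)T) in (X/Z) ×_D (Y/T) equals the composite subgroup (^{(u,v)}Z) * (^{(w,r)}T). -/

import Mathlib

/-- Let `G, H, K` be finite groups, `Z ≤ X ≤ G × H` and `T ≤ Y ≤ H × K` subgroups,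
and `D = k₂(X) ∩ k₁(Y)` (where `d ∈ D` iff `(1,d) ∈ X` and `(d,1) ∈ Y`). The group
`X*Y = {(g,k) : ∃ h, (g,h) ∈ X, (h,k) ∈ Y}` acts on `(X/Z) ×_D (Y/T)` (pairs of
cosets modulo the middle `D`-identification). The stabilizer in `X*Y` of the point
`((u,v)Z, (w,r)T)` equals the composite subgroup `(^{(u,v)}Z) * (^{(w,r)}T)`:
an element `(g,k)` of `X*Y` fixes the point (i.e. some lift `(g,h) ∈ X`,
`(h,k) ∈ Y` sends the pair of cosets to a `D`-translate of itself) if and only if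
`(g,k)` belongs to the composite of the conjugates `^{(u,v)}Z` and `^{(w,r)}T`. -/
theorem stabilizer_amalgamated_cosets {G H K : Type*} [Group G] [Group H] [Group K]
    [Finite G] [Finite H] [Finite K]
    (X Z : Subgroup (G × H)) (Y T : Subgroup (H × K))
    (hZX : Z ≤ X) (hTY : T ≤ Y)
    (u : G) (v : H) (w : H) (r : K) (huv : (u, v) ∈ X) (hwr : (w, r) ∈ Y)
    (g : G) (k : K) :
    (∃ h : H, (g, h) ∈ X ∧ (h, k) ∈ Y ∧
        ∃ d : H, ((1 : G), d) ∈ X ∧ (d, (1 : K)) ∈ Y ∧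
          ((u, d * v) : G × H)⁻¹ * (g * u, h * v) ∈ Z ∧
          ((d * w, r) : H × K)⁻¹ * (h * w, k * r) ∈ T) ↔
      ∃ h : H,
        (g, h) ∈ Z.map (MulAut.conj ((u, v) : G × H)).toMonoidHom ∧
        (h, k) ∈ T.map (MulAut.conj ((w, r) : H × K)).toMonoidHom := by
  constructor
  · rintro ⟨h, hX, hY, d, hdX, hdY, hz, ht⟩
    refine ⟨d⁻¹ * h, ?_, ?_⟩
    · rw [Subgroup.mem_map_equiv]
      convert hz using 1
      simp [MulAut.conj, Prod.ext_iff, mul_assoc]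
    · rw [Subgroup.mem_map_equiv]
      convert ht using 1
      simp [MulAut.conj, Prod.ext_iff, mul_assoc]
  · rintro ⟨h, hgz, hht⟩
    rw [Subgroup.mem_map_equiv] at hgz hht
    refine ⟨h, ?_, ?_, 1, by exact X.one_mem, by exact Y.one_mem, ?_, ?_⟩
    · have := X.mul_mem (X.mul_mem huv (hZX hgz)) (X.inv_mem huv)
      simpa [MulAut.conj, mul_assoc] using this
    · have := Y.mul_mem (Y.mul_mem hwr (hTY hht)) (Y.inv_mem hwr)
      simpa [MulAut.conj, mul_assoc] using this
    · convert hgz using 1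
      simp [MulAut.conj, Prod.ext_iff, mul_assoc]
    · convert hht using 1
      simp [MulAut.conj, Prod.ext_iff, mul_assoc]
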